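/- Let f = (f₁,f₂) : ℝ² → ℝ² be a C² vector field compactly supported in 𝔻. Then for all x ∈ ℝ²: (D_u D_v T_α f)(x) = −(∂̃₁f₁)(x) − (∂̃₂f₂)(x), where ∂̃₁ = −(1+α)u₁u₂∂₁ + (1−α)u₂²∂₂ and ∂̃₂ = (1−α)u₁²∂₁ − (1+α)u₁u₂∂₂. -/

import Mathlib

open MeasureTheory Set Filter Metric Function

noncomputable section

/-- Euclidean dot product on `ℝ × ℝ`. -/
def dot (a b : ℝ × ℝ) : ℝ := a.1 * b.1 + a.2 * b.2

/-- Rotation by `π/2`: `w⊥ = (−w₂, w₁)`. -/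
def perp (w : ℝ × ℝ) : ℝ × ℝ := (-w.2, w.1)

/-- The open unit disc in `ℝ²`. -/
def disc : Set (ℝ × ℝ) := {p : ℝ × ℝ | p.1 ^ 2 + p.2 ^ 2 < 1}

/-- Directional derivative along a constant vector `w`. -/
def Dc (w : ℝ × ℝ) (F : ℝ × ℝ → ℝ) (x : ℝ × ℝ) : ℝ := fderiv ℝ F x w

/-- The tilde partial derivative `∂̃₁ = −(1+α)u₁u₂∂₁ + (1−α)u₂²∂₂`. -/
def pt1 (α u₁ u₂ : ℝ) (g : ℝ × ℝ → ℝ) (x : ℝ × ℝ) : ℝ :=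
  -(1 + α) * u₁ * u₂ * fderiv ℝ g x (1, 0) + (1 - α) * u₂ ^ 2 * fderiv ℝ g x (0, 1)

/-- The tilde partial derivative `∂̃₂ = (1−α)u₁²∂₁ − (1+α)u₁u₂∂₂`. -/
def pt2 (α u₁ u₂ : ℝ) (g : ℝ × ℝ → ℝ) (x : ℝ × ℝ) : ℝ :=
  (1 - α) * u₁ ^ 2 * fderiv ℝ g x (1, 0) - (1 + α) * u₁ * u₂ * fderiv ℝ g x (0, 1)

/-- Longitudinal V-line transform with weight `α` and constant branch directions. -/
def Lc (α : ℝ) (u v : ℝ × ℝ) (f : ℝ × ℝ → ℝ × ℝ) (x : ℝ × ℝ) : ℝ :=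
  (- ∫ t in Set.Ioi (0 : ℝ), dot u (f (x + t • u))) +
    α * ∫ t in Set.Ioi (0 : ℝ), dot v (f (x + t • v))

/-- Transverse V-line transform with weight `α` and constant branch directions. -/
def Tc (α : ℝ) (u v : ℝ × ℝ) (f : ℝ × ℝ → ℝ × ℝ) (x : ℝ × ℝ) : ℝ :=
  (- ∫ t in Set.Ioi (0 : ℝ), dot (perp u) (f (x + t • u))) +
    α * ∫ t in Set.Ioi (0 : ℝ), dot (perp v) (f (x + t • v))


variable {E : Type*} [NormedAddCommGroup E] [NormedSpace ℝ E]

lemma line_hcs (g : ℝ × ℝ → E) (hcs : HasCompactSupport g) {w : ℝ × ℝ} (hw : w ≠ 0)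
    (x : ℝ × ℝ) : HasCompactSupport (fun t : ℝ => g (x + t • w)) := by
  obtain ⟨R, hR⟩ := hcs.isBounded.subset_closedBall 0
  have hw' : 0 < ‖w‖ := norm_pos_iff.mpr hw
  set M := (R + ‖x‖) / ‖w‖ with hM
  apply HasCompactSupport.intro (isCompact_Icc (a := -M) (b := M))
  intro t ht
  by_contra h
  have hmem : x + t • w ∈ tsupport g := subset_closure h
  have h1 : ‖x + t • w‖ ≤ R := by
    simpa [Metric.mem_closedBall, dist_eq_norm] using hR hmem
  have h2 : |t| * ‖w‖ ≤ R + ‖x‖ := by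
    have : ‖t • w‖ ≤ ‖x + t • w‖ + ‖x‖ := by
      calc ‖t • w‖ = ‖(x + t • w) - x‖ := by ring_nf
        _ ≤ ‖x + t • w‖ + ‖x‖ := norm_sub_le _ _
    rw [norm_smul, Real.norm_eq_abs] at this
    linarith
  have : |t| ≤ M := by rw [hM, le_div_iff₀ hw']; exact h2
  exact ht ⟨neg_le_of_abs_le this, le_of_abs_le this⟩

lemma keyA (g : ℝ × ℝ → ℝ) (hg : ContDiff ℝ 1 g) (hcs : HasCompactSupport g)
    {w : ℝ × ℝ} (hw : w ≠ 0) (x : ℝ × ℝ) :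
    HasFDerivAt (fun y => ∫ t in Ioi (0:ℝ), g (y + t • w))
      (∫ t in Ioi (0:ℝ), fderiv ℝ g (x + t • w)) x := by
  obtain ⟨R, hR⟩ := hcs.isBounded.subset_closedBall 0
  have hw' : 0 < ‖w‖ := norm_pos_iff.mpr hw
  obtain ⟨C, hC⟩ := (hcs.fderiv (𝕜 := ℝ)).exists_bound_of_continuous
    (hg.continuous_fderiv one_ne_zero)
  set M := (R + ‖x‖ + 1) / ‖w‖ with hMdef
  have key : ∀ y ∈ ball x 1, ∀ t : ℝ, t ∉ Icc (-M) M → fderiv ℝ g (y + t • w) = 0 := by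
    intro y hy t ht
    have hyx : ‖y‖ ≤ ‖x‖ + 1 := by
      have := mem_ball_iff_norm.mp hy
      calc ‖y‖ = ‖(y - x) + x‖ := by ring_nf
        _ ≤ ‖y - x‖ + ‖x‖ := norm_add_le _ _
        _ ≤ ‖x‖ + 1 := by linarith
    have htM : M < |t| := by
      by_contra h
      push_neg at h
      exact ht ⟨neg_le_of_abs_le h, le_of_abs_le h⟩
    have hout : y + t • w ∉ tsupport g := by
      intro hmem
      have h1 : ‖y + t • w‖ ≤ R := by
        simpa [Metric.mem_closedBall, dist_eq_norm] using hR hmem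
      have h2 : |t| * ‖w‖ ≤ R + ‖y‖ := by
        have : ‖t • w‖ ≤ ‖y + t • w‖ + ‖y‖ := by
          calc ‖t • w‖ = ‖(y + t • w) - y‖ := by ring_nf
            _ ≤ ‖y + t • w‖ + ‖y‖ := norm_sub_le _ _
        rw [norm_smul, Real.norm_eq_abs] at this; linarith
      have : |t| ≤ M := by
        rw [hMdef, le_div_iff₀ hw']
        nlinarith
      linarith
    have : y + t • w ∉ support (fderiv ℝ g) := fun h => hout (support_fderiv_subset ℝ h)
    simpa [mem_support, not_not] using this
  have hdiff : ∀ (t : ℝ) (y : ℝ × ℝ),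
      HasFDerivAt (fun z => g (z + t • w)) (fderiv ℝ g (y + t • w)) y := by
    intro t y
    have h1 : HasFDerivAt (fun z : ℝ × ℝ => z + t • w)
        (ContinuousLinearMap.id ℝ (ℝ × ℝ)) y := (hasFDerivAt_id y).add_const _
    have h2 := ((hg.differentiable one_ne_zero) (y + t • w)).hasFDerivAt
    simpa [Function.comp_def] using h2.comp y h1
  have hbound_int : Integrable ((Icc (-M) M).indicator fun _ : ℝ => C)
      (volume.restrict (Ioi (0:ℝ))) := by
    rw [integrable_indicator_iff measurableSet_Icc]
    apply (integrableOn_const_iff enorm_ne_top).mpr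
    right
    exact lt_of_le_of_lt (Measure.restrict_apply_le _ _) measure_Icc_lt_top
  apply hasFDerivAt_integral_of_dominated_of_fderiv_le (s := ball x 1)
    (μ := volume.restrict (Ioi (0:ℝ)))
    (F := fun y (t : ℝ) => g (y + t • w)) (F' := fun y (t : ℝ) => fderiv ℝ g (y + t • w))
    (bound := (Icc (-M) M).indicator fun _ => C) (ball_mem_nhds x one_pos)
  · filter_upwards with y
    exact (hg.continuous.comp (continuous_const.add (continuous_id.smul continuous_const))).aestronglyMeasurable
  · exact ((hg.continuous.comp (continuous_const.add (continuous_id.smul continuous_const))).integrable_of_hasCompactSupport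
      (line_hcs g hcs hw x)).restrict
  · exact (((hg.continuous_fderiv one_ne_zero).comp (continuous_const.add (continuous_id.smul continuous_const))).aestronglyMeasurable)
  · filter_upwards with t
    intro y hy
    by_cases ht : t ∈ Icc (-M) M
    · rw [indicator_of_mem ht]; exact hC _
    · rw [indicator_of_notMem ht, key y hy t ht]; simp
  · exact hbound_int
  · filter_upwards with t
    intro y _
    exact hdiff t y

lemma keyB (g : ℝ × ℝ → ℝ) (hg : ContDiff ℝ 1 g) (hcs : HasCompactSupport g)
    {w : ℝ × ℝ} (hw : w ≠ 0) (x : ℝ × ℝ) :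
    ∫ t in Ioi (0:ℝ), fderiv ℝ g (x + t • w) w = -(g x) := by
  have hline : HasDerivAt (fun t : ℝ => x + t • w) w 0 := by
    simpa using ((hasDerivAt_id (0:ℝ)).smul_const w).const_add x
  have hderiv : ∀ t ∈ Ici (0:ℝ), HasDerivAt (fun s : ℝ => g (x + s • w))
      (fderiv ℝ g (x + t • w) w) t := by
    intro t _
    have hl : HasDerivAt (fun s : ℝ => x + s • w) w t := by
      simpa using ((hasDerivAt_id t).smul_const w).const_add x
    exact (((hg.differentiable one_ne_zero) (x + t • w)).hasFDerivAt).comp_hasDerivAt t hl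
  have hcsl := line_hcs g hcs hw x
  have hcs' : HasCompactSupport (fun t : ℝ => fderiv ℝ g (x + t • w) w) := by
    have h1 : HasCompactSupport (fun y => fderiv ℝ g y w) := hcs.fderiv_apply (𝕜 := ℝ) w
    exact line_hcs (fun y => fderiv ℝ g y w) h1 hw x
  have hint : IntegrableOn (fun t : ℝ => fderiv ℝ g (x + t • w) w) (Ioi 0) := by
    apply Integrable.integrableOn
    exact Continuous.integrable_of_hasCompactSupport
      (((hg.continuous_fderiv one_ne_zero).comp (continuous_const.add (continuous_id.smul continuous_const))).clm_apply continuous_const) hcs'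
  have htend : Tendsto (fun t : ℝ => g (x + t • w)) atTop (nhds 0) := by
    obtain ⟨K, hK⟩ := hcsl.isBounded.subset_closedBall 0
    apply Tendsto.congr' _ tendsto_const_nhds
    filter_upwards [Ioi_mem_atTop K] with t ht
    by_contra h
    have : t ∈ tsupport fun s : ℝ => g (x + s • w) := subset_closure fun hh => h hh.symm
    have := hK this
    simp only [Metric.mem_closedBall, dist_zero_right, Real.norm_eq_abs] at this
    have : t ≤ K := le_of_abs_le this
    simp only [mem_Ioi] at ht
    linarith
  have := integral_Ioi_of_hasDerivAt_of_tendsto'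
    (f := fun t : ℝ => g (x + t • w)) hderiv hint htend
  simpa using this

lemma int_clm (g : ℝ × ℝ → ℝ) (hg : ContDiff ℝ 1 g) (hcs : HasCompactSupport g)
    {w : ℝ × ℝ} (hw : w ≠ 0) (x z : ℝ × ℝ) :
    (∫ t in Ioi (0:ℝ), fderiv ℝ g (x + t • w)) z
      = ∫ t in Ioi (0:ℝ), fderiv ℝ g (x + t • w) z := by
  apply ContinuousLinearMap.integral_apply
  exact (((hg.continuous_fderiv one_ne_zero).comp
    (continuous_const.add (continuous_id.smul continuous_const))).integrable_of_hasCompactSupport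
    (line_hcs (fderiv ℝ g) (hcs.fderiv (𝕜 := ℝ)) hw x)).restrict

lemma keyMain (α : ℝ) (a b : ℝ × ℝ → ℝ) (ha : ContDiff ℝ 2 a) (hb : ContDiff ℝ 2 b)
    (hacs : HasCompactSupport a) (hbcs : HasCompactSupport b)
    {u v : ℝ × ℝ} (hu : u ≠ 0) (hv : v ≠ 0) (x : ℝ × ℝ) :
    fderiv ℝ (fun z => fderiv ℝ
        (fun y => (-∫ t in Ioi (0:ℝ), a (y + t • u)) + α * ∫ t in Ioi (0:ℝ), b (y + t • v)) z v)
        x u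
      = fderiv ℝ a x v - α * fderiv ℝ b x u := by
  have ha1 : ContDiff ℝ 1 a := ha.of_le one_le_two
  have hb1 : ContDiff ℝ 1 b := hb.of_le one_le_two
  have hDva : ContDiff ℝ 1 (fun y => fderiv ℝ a y v) :=
    (ha.fderiv_right (m := 1) (by norm_num)).clm_apply contDiff_const
  have hDvacs : HasCompactSupport (fun y => fderiv ℝ a y v) := hacs.fderiv_apply (𝕜 := ℝ) v
  have step1 : (fun z => fderiv ℝ
      (fun y => (-∫ t in Ioi (0:ℝ), a (y + t • u)) + α * ∫ t in Ioi (0:ℝ), b (y + t • v)) z v)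
      = fun z => (-∫ t in Ioi (0:ℝ), fderiv ℝ a (z + t • u) v) - α * b z := by
    funext z
    have h1 := keyA a ha1 hacs hu z
    have h2 := keyA b hb1 hbcs hv z
    have hT : HasFDerivAt (fun y => (-∫ t in Ioi (0:ℝ), a (y + t • u)) + α * ∫ t in Ioi (0:ℝ), b (y + t • v)) _ z :=
      (h1.neg).add (h2.const_mul α)
    rw [hT.fderiv]
    simp only [ContinuousLinearMap.add_apply, ContinuousLinearMap.neg_apply,
      ContinuousLinearMap.smul_apply, smul_eq_mul]
    rw [int_clm a ha1 hacs hu z v, int_clm b hb1 hbcs hv z v, keyB b hb1 hbcs hv z]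
    ring
  rw [step1]
  have h3 := keyA (fun y => fderiv ℝ a y v) hDva hDvacs hu x
  have hb_diff : HasFDerivAt b (fderiv ℝ b x) x := ((hb1.differentiable one_ne_zero) x).hasFDerivAt
  have hP : HasFDerivAt (fun z => (-∫ t in Ioi (0:ℝ), fderiv ℝ a (z + t • u) v) - α * b z) _ x :=
    (h3.neg).sub (hb_diff.const_mul α)
  rw [hP.fderiv]
  simp only [ContinuousLinearMap.sub_apply, ContinuousLinearMap.neg_apply,
    ContinuousLinearMap.smul_apply, smul_eq_mul]
  rw [int_clm (fun y => fderiv ℝ a y v) hDva hDvacs hu x u,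
    keyB (fun y => fderiv ℝ a y v) hDva hDvacs hu x]
  ring

theorem stmt14 (α u₁ u₂ : ℝ) (hunit : u₁ ^ 2 + u₂ ^ 2 = 1) (hne : u₁ * u₂ ≠ 0)
    (f : ℝ × ℝ → ℝ × ℝ) (hf : ContDiff ℝ 2 f)
    (hcs : HasCompactSupport f) (hsupp : tsupport f ⊆ disc) :
    ∀ x, Dc (u₁, u₂) (Dc (-u₁, u₂) (Tc α (u₁, u₂) (-u₁, u₂) f)) x =
      -(pt1 α u₁ u₂ (fun y => (f y).1) x) - pt2 α u₁ u₂ (fun y => (f y).2) x := by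
  intro x
  have hu1 : u₁ ≠ 0 := left_ne_zero_of_mul hne
  have hu2 : u₂ ≠ 0 := right_ne_zero_of_mul hne
  have hu : ((u₁, u₂) : ℝ × ℝ) ≠ 0 := by
    simp only [Ne, Prod.ext_iff, Prod.fst_zero, Prod.snd_zero, not_and]
    intro h; exact absurd h hu1
  have hv : ((-u₁, u₂) : ℝ × ℝ) ≠ 0 := by
    simp only [Ne, Prod.ext_iff, Prod.fst_zero, Prod.snd_zero, not_and]
    intro h; exact absurd (neg_eq_zero.mp h) hu1
  have hf1 : ContDiff ℝ 2 (fun y => (f y).1) := contDiff_fst.comp hf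
  have hf2 : ContDiff ℝ 2 (fun y => (f y).2) := contDiff_snd.comp hf
  set a : ℝ × ℝ → ℝ := fun y => -u₂ * (f y).1 + u₁ * (f y).2 with ha_def
  set b : ℝ × ℝ → ℝ := fun y => -u₂ * (f y).1 + -u₁ * (f y).2 with hb_def
  have ha : ContDiff ℝ 2 a := (contDiff_const.mul hf1).add (contDiff_const.mul hf2)
  have hb : ContDiff ℝ 2 b := (contDiff_const.mul hf1).add (contDiff_const.mul hf2)
  have hacs : HasCompactSupport a :=
    hcs.comp_left (g := fun p : ℝ × ℝ => -u₂ * p.1 + u₁ * p.2) (by simp)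
  have hbcs : HasCompactSupport b :=
    hcs.comp_left (g := fun p : ℝ × ℝ => -u₂ * p.1 + -u₁ * p.2) (by simp)
  have hTc : Tc α (u₁, u₂) (-u₁, u₂) f = fun y =>
      (-∫ t in Ioi (0:ℝ), a (y + t • ((u₁, u₂) : ℝ × ℝ))) +
        α * ∫ t in Ioi (0:ℝ), b (y + t • ((-u₁, u₂) : ℝ × ℝ)) := by
    funext y
    simp only [Tc, dot, perp, ha_def, hb_def]
  rw [hTc]
  show fderiv ℝ (fun z => fderiv ℝ
      (fun y => (-∫ t in Ioi (0:ℝ), a (y + t • ((u₁, u₂) : ℝ × ℝ))) +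
        α * ∫ t in Ioi (0:ℝ), b (y + t • ((-u₁, u₂) : ℝ × ℝ))) z ((-u₁, u₂) : ℝ × ℝ))
      x ((u₁, u₂) : ℝ × ℝ) = _
  rw [keyMain α a b ha hb hacs hbcs hu hv x]
  have hd1 : HasFDerivAt (fun y => (f y).1) (fderiv ℝ (fun y => (f y).1) x) x :=
    ((hf1.differentiable (by norm_num)) x).hasFDerivAt
  have hd2 : HasFDerivAt (fun y => (f y).2) (fderiv ℝ (fun y => (f y).2) x) x :=
    ((hf2.differentiable (by norm_num)) x).hasFDerivAt
  have haD : HasFDerivAt a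
      ((-u₂) • fderiv ℝ (fun y => (f y).1) x + u₁ • fderiv ℝ (fun y => (f y).2) x) x :=
    (hd1.const_mul (-u₂)).add (hd2.const_mul u₁)
  have hbD : HasFDerivAt b
      ((-u₂) • fderiv ℝ (fun y => (f y).1) x + (-u₁) • fderiv ℝ (fun y => (f y).2) x) x :=
    (hd1.const_mul (-u₂)).add (hd2.const_mul (-u₁))
  rw [haD.fderiv, hbD.fderiv]
  have e1 : ((-u₁, u₂) : ℝ × ℝ) = (-u₁) • ((1:ℝ), (0:ℝ)) + u₂ • ((0:ℝ), (1:ℝ)) := by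
    simp [Prod.ext_iff]
  have e2 : ((u₁, u₂) : ℝ × ℝ) = u₁ • ((1:ℝ), (0:ℝ)) + u₂ • ((0:ℝ), (1:ℝ)) := by
    simp [Prod.ext_iff]
  rw [e1, e2]
  simp only [ContinuousLinearMap.add_apply, ContinuousLinearMap.smul_apply, map_add, _root_.map_smul,
    smul_eq_mul, pt1, pt2]
  ring
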